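/- Let X be a topological space whose diagonal Δ = {(x,x) : x ∈ X} is a regular G_δ-set in X × X, and let E be a B₁-retract of X. Then E is a G_δ-set in X. -/

import Mathlib

/-- A function between topological spaces is *Baire-one* if it is a pointwise limit of a
sequence of continuous functions. -/
def IsBaireOne {X Y : Type*} [TopologicalSpace X] [TopologicalSpace Y] (f : X → Y) : Prop :=
  ∃ g : ℕ → X → Y, (∀ n, Continuous (g n)) ∧
    ∀ x, Filter.Tendsto (fun n => g n x) Filter.atTop (nhds (f x))

/-- A subset `E` of a topological space `X` is a *B₁-retract* of `X` if there exists a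
Baire-one function `r : X → E` such that `r x = x` for all `x ∈ E`. -/
def IsB1Retract {X : Type*} [TopologicalSpace X] (E : Set X) : Prop :=
  ∃ r : X → E, IsBaireOne r ∧ ∀ x (hx : x ∈ E), (r x : X) = x

/-- A subset `A` of a topological space is a *regular Gδ-set* if there is a sequence of open
sets `Gₙ` with `A = ⋂ₙ Gₙ = ⋂ₙ closure Gₙ`. -/
def IsRegularGdelta {Z : Type*} [TopologicalSpace Z] (A : Set Z) : Prop :=
  ∃ G : ℕ → Set Z, (∀ n, IsOpen (G n)) ∧ A = ⋂ n, G n ∧ A = ⋂ n, closure (G n)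

theorem isGdelta_of_b1_retract_of_regular_gdelta_diagonal {X : Type*} [TopologicalSpace X]
    (hdiag : IsRegularGdelta (Set.diagonal X)) (E : Set X) (hE : IsB1Retract E) :
    IsGδ E := by
  obtain ⟨G, hGopen, hG1, hG2⟩ := hdiag
  obtain ⟨r, ⟨g, hgc, hgt⟩, hr⟩ := hE
  have key : E = ⋂ k, ⋂ N, ⋃ n, ⋃ _ : N ≤ n, {x | ((g n x : X), x) ∈ G k} := by
    ext x
    simp only [Set.mem_iInter, Set.mem_iUnion, Set.mem_setOf_eq]
    constructor
    · intro hx k N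
      have hrx : (r x : X) = x := hr x hx
      have htend : Filter.Tendsto (fun n => ((g n x : X), x)) Filter.atTop (nhds (x, x)) := by
        have h1 : Filter.Tendsto (fun n => (g n x : X)) Filter.atTop (nhds x) := by
          have := (continuous_subtype_val.tendsto (r x)).comp (hgt x)
          simpa [hrx, Function.comp_def] using this
        exact h1.prodMk_nhds tendsto_const_nhds
      have hmem : (x, x) ∈ G k := by
        have hd : (x, x) ∈ Set.diagonal X := rfl
        rw [hG1] at hd
        exact Set.mem_iInter.mp hd k
      have hev := htend.eventually ((hGopen k).mem_nhds hmem)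
      obtain ⟨n, hn, hn2⟩ := (hev.and (Filter.eventually_ge_atTop N)).exists
      exact ⟨n, hn2, hn⟩
    · intro h
      have htend : Filter.Tendsto (fun n => ((g n x : X), x)) Filter.atTop
          (nhds ((r x : X), x)) :=
        ((continuous_subtype_val.tendsto (r x)).comp (hgt x)).prodMk_nhds tendsto_const_nhds
      have hcl : ((r x : X), x) ∈ Set.diagonal X := by
        rw [hG2, Set.mem_iInter]
        intro k
        have hfreq : ∃ᶠ n in Filter.atTop, ((g n x : X), x) ∈ G k := by
          rw [Filter.frequently_atTop]
          intro N
          obtain ⟨n, hn, hmem⟩ := h k N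
          exact ⟨n, hn, hmem⟩
        exact mem_closure_of_frequently_of_tendsto hfreq htend
      have hrx : (r x : X) = x := hcl
      rw [← hrx]
      exact (r x).2
  rw [key]
  exact .iInter fun k => .iInter fun N =>
    (isOpen_iUnion fun n => isOpen_iUnion fun _ =>
      (hGopen k).preimage ((continuous_subtype_val.comp (hgc n)).prodMk continuous_id)).isGδ
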